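/- Let (M,g) be a pseudo-Riemannian manifold and k_{ab} a trace-free symmetric Killing tensor for g (so ∇_{(a}k_{bc)} = 0 and ∇^b k_{ba} = 0). If ĝ = e^{2V} g is another metric in the conformal class, then k_{ab} (appropriately weighted) is Killing for ĝ if and only if k_{ab}∇^b V = 0. -/

import Mathlib

noncomputable section
open scoped BigOperators

/-- Partial derivative `∂ᵢ f` of a real-valued function on the chart `Fin n → ℝ`. -/
def pd {n : ℕ} (i : Fin n) (f : (Fin n → ℝ) → ℝ) (x : Fin n → ℝ) : ℝ :=
  fderiv ℝ f x (fun j => if j = i then (1 : ℝ) else 0)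

/-- A pseudo-Riemannian metric on the global chart `Fin n → ℝ`. -/
structure PseudoRiemMetric (n : ℕ) where
  g : (Fin n → ℝ) → Fin n → Fin n → ℝ
  ginv : (Fin n → ℝ) → Fin n → Fin n → ℝ
  symm : ∀ x a b, g x a b = g x b a
  invl : ∀ x a b, (∑ c, ginv x a c * g x c b) = if a = b then (1 : ℝ) else 0
  smooth_g : ∀ a b, ContDiff ℝ (⊤ : ℕ∞) fun x => g x a b
  smooth_ginv : ∀ a b, ContDiff ℝ (⊤ : ℕ∞) fun x => ginv x a b

namespace PseudoRiemMetric

variable {n : ℕ} (M : PseudoRiemMetric n)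

/-- Christoffel symbols `Γ^a_{bc}` of the Levi-Civita connection. -/
def Γ (x : Fin n → ℝ) (a b c : Fin n) : ℝ :=
  (1 / 2) * ∑ d, M.ginv x a d *
    (pd b (fun y => M.g y d c) x + pd c (fun y => M.g y d b) x - pd d (fun y => M.g y b c) x)

/-- Covariant derivative `∇_a k_b` of a 1-form. -/
def covD1 (k : (Fin n → ℝ) → Fin n → ℝ) (x : Fin n → ℝ) (a b : Fin n) : ℝ :=
  pd a (fun y => k y b) x - ∑ c, M.Γ x c a b * k x c

/-- Covariant derivative `∇_a v^b` of a vector field. -/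
def covDvec (v : (Fin n → ℝ) → Fin n → ℝ) (x : Fin n → ℝ) (a b : Fin n) : ℝ :=
  pd a (fun y => v y b) x + ∑ c, M.Γ x b a c * v x c

/-- Covariant derivative `∇_a k_{bc}` of a covariant 2-tensor. -/
def covD2 (k : (Fin n → ℝ) → Fin n → Fin n → ℝ) (x : Fin n → ℝ) (a b c : Fin n) : ℝ :=
  pd a (fun y => k y b c) x - (∑ d, M.Γ x d a b * k x d c) - ∑ d, M.Γ x d a c * k x b d

/-- Divergence `∇_a v^a` of a vector field. -/
def divVec (v : (Fin n → ℝ) → Fin n → ℝ) (x : Fin n → ℝ) : ℝ :=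
  ∑ a, M.covDvec v x a a

/-- Laplacian `Δf = g^{ac} ∇_a ∇_c f` of a function. -/
def lap0 (f : (Fin n → ℝ) → ℝ) (x : Fin n → ℝ) : ℝ :=
  ∑ a, ∑ c, M.ginv x a c * M.covD1 (fun y b => pd b f y) x a c

/-- Laplacian `Δk_b = g^{ac} ∇_a ∇_c k_b` of a 1-form. -/
def lap1 (k : (Fin n → ℝ) → Fin n → ℝ) (x : Fin n → ℝ) (b : Fin n) : ℝ :=
  ∑ a, ∑ c, M.ginv x a c * M.covD2 (fun y p q => M.covD1 k y p q) x a c b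

/-- Riemann curvature `R_{ab}{}^c{}_d`, with the convention
`R_{ab}{}^c{}_d X^d = ∇_a ∇_b X^c - ∇_b ∇_a X^c`. -/
def Riem (x : Fin n → ℝ) (a b c d : Fin n) : ℝ :=
  pd a (fun y => M.Γ y c b d) x - pd b (fun y => M.Γ y c a d) x
    + (∑ e, M.Γ x c a e * M.Γ x e b d) - ∑ e, M.Γ x c b e * M.Γ x e a d

/-- Ricci curvature `R_{bd} = R_{ab}{}^a{}_d`. -/
def Ricci (x : Fin n → ℝ) (b d : Fin n) : ℝ := ∑ a, M.Riem x a b a d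

/-- Scalar curvature. -/
def scal (x : Fin n → ℝ) : ℝ := ∑ b, ∑ d, M.ginv x b d * M.Ricci x b d

/-- Trace of the Schouten tensor, `J = Scal/(2(n-1))`. -/
def Jsc (x : Fin n → ℝ) : ℝ := (1 / (2 * ((n : ℝ) - 1))) * M.scal x

/-- Schouten tensor, `P_{ab} = (Ric_{ab} - J g_{ab})/(n-2)`. -/
def Schouten (x : Fin n → ℝ) (a b : Fin n) : ℝ :=
  (1 / ((n : ℝ) - 2)) * (M.Ricci x a b - M.Jsc x * M.g x a b)

end PseudoRiemMetric


lemma pd_mul {n : ℕ} (i : Fin n) (f g : (Fin n → ℝ) → ℝ) (x : Fin n → ℝ)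
    (hf : DifferentiableAt ℝ f x) (hg : DifferentiableAt ℝ g x) :
    pd i (fun y => f y * g y) x = pd i f x * g x + f x * pd i g x := by
  simp [pd, fderiv_fun_mul hf hg]; ring

lemma pd_exp {n : ℕ} (i : Fin n) (c : ℝ) (V : (Fin n → ℝ) → ℝ) (x : Fin n → ℝ)
    (hV : DifferentiableAt ℝ V x) :
    pd i (fun y => Real.exp (c * V y)) x = c * Real.exp (c * V x) * pd i V x := by
  have h1 : DifferentiableAt ℝ (fun y => c * V y) x := hV.const_mul c
  simp [pd, fderiv_exp h1, fderiv_const_mul hV c]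
  ring
section
variable {n : ℕ} (M : PseudoRiemMetric n)

/-- right inverse -/
lemma PseudoRiemMetric.invr (x : Fin n → ℝ) (a b : Fin n) :
    (∑ c, M.g x a c * M.ginv x c b) = if a = b then (1 : ℝ) else 0 := by
  have hAG : (Matrix.of (M.ginv x)) * (Matrix.of (M.g x)) = 1 := by
    ext a b
    simp [Matrix.mul_apply, Matrix.one_apply, M.invl x a b]
  have hGA : (Matrix.of (M.g x)) * (Matrix.of (M.ginv x)) = 1 :=
    (mul_eq_one_comm).mp hAG
  have := congrFun (congrFun hGA a) b
  simpa [Matrix.mul_apply, Matrix.one_apply] using this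

lemma ginv_conf (M M' : PseudoRiemMetric n) (V : (Fin n → ℝ) → ℝ)
    (hconf : ∀ x a b, M'.g x a b = Real.exp (2 * V x) * M.g x a b)
    (x : Fin n → ℝ) (a b : Fin n) :
    M'.ginv x a b = Real.exp (-(2 * V x)) * M.ginv x a b := by
  set c := Real.exp (2 * V x) with hc
  have hc0 : c ≠ 0 := Real.exp_ne_zero _
  have hAG : (Matrix.of (M.ginv x)) * (Matrix.of (M.g x)) = 1 := by
    ext a b; simp [Matrix.mul_apply, Matrix.one_apply, M.invl x a b]
  have hGA : (Matrix.of (M.g x)) * (Matrix.of (M.ginv x)) = 1 :=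
    (mul_eq_one_comm).mp hAG
  have hG' : (Matrix.of (M'.g x)) = c • (Matrix.of (M.g x)) := by
    ext a b; simp [hconf x a b, hc]
  have hBG : (Matrix.of (M'.ginv x)) * (Matrix.of (M'.g x)) = 1 := by
    ext a b; simp [Matrix.mul_apply, Matrix.one_apply, M'.invl x a b]
  have key : (Matrix.of (M'.ginv x)) = c⁻¹ • (Matrix.of (M.ginv x)) := by
    have h1 : (Matrix.of (M'.ginv x)) * (Matrix.of (M.g x)) = c⁻¹ • 1 := by
      have := hBG
      rw [hG', Matrix.mul_smul] at this
      calc (Matrix.of (M'.ginv x)) * (Matrix.of (M.g x))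
          = c⁻¹ • (c • ((Matrix.of (M'.ginv x)) * (Matrix.of (M.g x)))) := by
            rw [smul_smul, inv_mul_cancel₀ hc0, one_smul]
        _ = c⁻¹ • 1 := by rw [this]
    calc (Matrix.of (M'.ginv x))
        = (Matrix.of (M'.ginv x)) * ((Matrix.of (M.g x)) * (Matrix.of (M.ginv x))) := by
          rw [hGA, Matrix.mul_one]
      _ = ((Matrix.of (M'.ginv x)) * (Matrix.of (M.g x))) * (Matrix.of (M.ginv x)) := by
          rw [Matrix.mul_assoc]
      _ = c⁻¹ • (Matrix.of (M.ginv x)) := by rw [h1, Matrix.smul_mul, Matrix.one_mul]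
  have := congrFun (congrFun key a) b
  simpa [Real.exp_neg, hc] using this

end
section
variable {n : ℕ}

lemma pd_gconf (M M' : PseudoRiemMetric n) (V : (Fin n → ℝ) → ℝ) (hV : ContDiff ℝ (⊤ : ℕ∞) V)
    (hconf : ∀ x a b, M'.g x a b = Real.exp (2 * V x) * M.g x a b)
    (i a b : Fin n) (x : Fin n → ℝ) :
    pd i (fun y => M'.g y a b) x
      = Real.exp (2 * V x) * (2 * pd i V x * M.g x a b + pd i (fun y => M.g y a b) x) := by
  have hVd : DifferentiableAt ℝ V x := (hV.differentiable (by simp)) x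
  have hgd : DifferentiableAt ℝ (fun y => M.g y a b) x :=
    ((M.smooth_g a b).differentiable (by simp)) x
  have hed : DifferentiableAt ℝ (fun y => Real.exp (2 * V y)) x :=
    (hVd.const_mul 2).exp
  have h1 : (fun y => M'.g y a b) = fun y => Real.exp (2 * V y) * M.g y a b := by
    funext y; exact hconf y a b
  rw [h1, pd_mul i _ _ x hed hgd, pd_exp i 2 V x hVd]
  ring

lemma Γ_conf (M M' : PseudoRiemMetric n) (V : (Fin n → ℝ) → ℝ) (hV : ContDiff ℝ (⊤ : ℕ∞) V)
    (hconf : ∀ x a b, M'.g x a b = Real.exp (2 * V x) * M.g x a b)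
    (x : Fin n → ℝ) (a b c : Fin n) :
    M'.Γ x a b c = M.Γ x a b c + (if a = c then pd b V x else 0)
      + (if a = b then pd c V x else 0)
      - M.g x b c * (∑ d, M.ginv x a d * pd d V x) := by
  have hcc : Real.exp (-(2 * V x)) * Real.exp (2 * V x) = 1 := by
    rw [← Real.exp_add]; simp
  have key : ∀ d : Fin n,
      M'.ginv x a d *
        (pd b (fun y => M'.g y d c) x + pd c (fun y => M'.g y d b) x
          - pd d (fun y => M'.g y b c) x)
      = M.ginv x a d *
          (pd b (fun y => M.g y d c) x + pd c (fun y => M.g y d b) x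
            - pd d (fun y => M.g y b c) x)
        + 2 * (pd b V x * (M.ginv x a d * M.g x d c)
            + pd c V x * (M.ginv x a d * M.g x d b)
            - (M.ginv x a d * pd d V x) * M.g x b c) := by
    intro d
    rw [ginv_conf M M' V hconf, pd_gconf M M' V hV hconf, pd_gconf M M' V hV hconf,
      pd_gconf M M' V hV hconf]
    have expand : ∀ (u v X Y Z w : ℝ), u * w = 1 →
        (u * v) * (w * X + w * Y - w * Z) = v * (X + Y - Z) := by
      intro u v X Y Z w h
      calc (u * v) * (w * X + w * Y - w * Z) = (u * w) * (v * (X + Y - Z)) := by ring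
        _ = v * (X + Y - Z) := by rw [h, one_mul]
    rw [expand _ _ _ _ _ _ hcc]
    ring
  unfold PseudoRiemMetric.Γ
  rw [Finset.sum_congr rfl fun d _ => key d, Finset.sum_add_distrib]
  have h2 : ∑ d, (2:ℝ) * (pd b V x * (M.ginv x a d * M.g x d c)
        + pd c V x * (M.ginv x a d * M.g x d b)
        - (M.ginv x a d * pd d V x) * M.g x b c)
      = 2 * (pd b V x * (if a = c then (1:ℝ) else 0)
        + pd c V x * (if a = b then (1:ℝ) else 0)
        - (∑ d, M.ginv x a d * pd d V x) * M.g x b c) := by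
    rw [← Finset.mul_sum]
    congr 1
    rw [Finset.sum_sub_distrib, Finset.sum_add_distrib, ← Finset.mul_sum, ← Finset.mul_sum,
      M.invl x a c, M.invl x a b, ← Finset.sum_mul]
  rw [h2]
  by_cases hac : a = c <;> by_cases hab : a = b <;> simp [hac, hab] <;> ring
end
section
variable {n : ℕ}

lemma sum_Γconf_mul (M M' : PseudoRiemMetric n) (V : (Fin n → ℝ) → ℝ) (hV : ContDiff ℝ (⊤ : ℕ∞) V)
    (hconf : ∀ x a b, M'.g x a b = Real.exp (2 * V x) * M.g x a b)
    (k : (Fin n → ℝ) → Fin n → Fin n → ℝ)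
    (x : Fin n → ℝ) (a b c : Fin n) :
    (∑ d, M'.Γ x d a b * (Real.exp (4 * V x) * k x d c))
      = Real.exp (4 * V x) * ((∑ d, M.Γ x d a b * k x d c)
          + pd a V x * k x b c + pd b V x * k x a c
          - M.g x a b * ∑ d, (∑ e, M.ginv x d e * pd e V x) * k x d c) := by
  have key : ∀ d : Fin n, M'.Γ x d a b * (Real.exp (4 * V x) * k x d c)
      = Real.exp (4 * V x) * (M.Γ x d a b * k x d c)
        + (if d = b then Real.exp (4 * V x) * (pd a V x * k x d c) else 0)
        + (if d = a then Real.exp (4 * V x) * (pd b V x * k x d c) else 0)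
        - Real.exp (4 * V x) * M.g x a b * ((∑ e, M.ginv x d e * pd e V x) * k x d c) := by
    intro d
    rw [Γ_conf M M' V hV hconf x d a b]
    split_ifs <;> ring
  rw [Finset.sum_congr rfl fun d _ => key d]
  rw [Finset.sum_sub_distrib, Finset.sum_add_distrib, Finset.sum_add_distrib,
    ← Finset.mul_sum, ← Finset.mul_sum]
  simp only [Finset.sum_ite_eq', Finset.mem_univ, if_true]
  ring

lemma covD2_conf (M M' : PseudoRiemMetric n) (V : (Fin n → ℝ) → ℝ) (hV : ContDiff ℝ (⊤ : ℕ∞) V)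
    (hconf : ∀ x a b, M'.g x a b = Real.exp (2 * V x) * M.g x a b)
    (k : (Fin n → ℝ) → Fin n → Fin n → ℝ)
    (hk_symm : ∀ x a b, k x a b = k x b a)
    (hk_smooth : ∀ a b, ContDiff ℝ (⊤ : ℕ∞) fun x => k x a b)
    (x : Fin n → ℝ) (a b c : Fin n) :
    M'.covD2 (fun y p q => Real.exp (4 * V y) * k y p q) x a b c
      = Real.exp (4 * V x) * (M.covD2 k x a b c
          + 2 * pd a V x * k x b c - pd b V x * k x a c - pd c V x * k x a b
          + M.g x a b * (∑ d, (∑ e, M.ginv x d e * pd e V x) * k x d c)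
          + M.g x a c * (∑ d, (∑ e, M.ginv x d e * pd e V x) * k x d b)) := by
  have hVd : DifferentiableAt ℝ V x := (hV.differentiable (by simp)) x
  have hkd : DifferentiableAt ℝ (fun y => k y b c) x :=
    ((hk_smooth b c).differentiable (by simp)) x
  have hed : DifferentiableAt ℝ (fun y => Real.exp (4 * V y)) x := (hVd.const_mul 4).exp
  have hpd : pd a (fun y => Real.exp (4 * V y) * k y b c) x
      = 4 * Real.exp (4 * V x) * pd a V x * k x b c
        + Real.exp (4 * V x) * pd a (fun y => k y b c) x := by
    rw [pd_mul a _ _ x hed hkd, pd_exp a 4 V x hVd]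
    try ring
  have h3 : (∑ d, M'.Γ x d a c * (Real.exp (4 * V x) * k x b d))
      = Real.exp (4 * V x) * ((∑ d, M.Γ x d a c * k x b d)
          + pd a V x * k x b c + pd c V x * k x a b
          - M.g x a c * ∑ d, (∑ e, M.ginv x d e * pd e V x) * k x d b) := by
    rw [Finset.sum_congr rfl fun d (_ : d ∈ Finset.univ) =>
        (by rw [hk_symm x b d] :
          M'.Γ x d a c * (Real.exp (4 * V x) * k x b d)
            = M'.Γ x d a c * (Real.exp (4 * V x) * k x d b)),
      Finset.sum_congr rfl fun d (_ : d ∈ Finset.univ) =>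
        (by rw [hk_symm x b d] : M.Γ x d a c * k x b d = M.Γ x d a c * k x d b),
      sum_Γconf_mul M M' V hV hconf k x a c b, hk_symm x c b, hk_symm x a b]
  simp only [PseudoRiemMetric.covD2]
  rw [hpd, sum_Γconf_mul M M' V hV hconf k x a b c, h3]
  ring
end
section
variable {n : ℕ}

lemma cyclic_conf (M M' : PseudoRiemMetric n) (V : (Fin n → ℝ) → ℝ) (hV : ContDiff ℝ (⊤ : ℕ∞) V)
    (hconf : ∀ x a b, M'.g x a b = Real.exp (2 * V x) * M.g x a b)
    (k : (Fin n → ℝ) → Fin n → Fin n → ℝ)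
    (hk_symm : ∀ x a b, k x a b = k x b a)
    (hk_smooth : ∀ a b, ContDiff ℝ (⊤ : ℕ∞) fun x => k x a b)
    (hKilling : ∀ x a b c,
      M.covD2 k x a b c + M.covD2 k x b c a + M.covD2 k x c a b = 0)
    (x : Fin n → ℝ) (a b c : Fin n) :
    M'.covD2 (fun y p q => Real.exp (4 * V y) * k y p q) x a b c
      + M'.covD2 (fun y p q => Real.exp (4 * V y) * k y p q) x b c a
      + M'.covD2 (fun y p q => Real.exp (4 * V y) * k y p q) x c a b
    = 2 * Real.exp (4 * V x) *
        (M.g x a b * (∑ d, (∑ e, M.ginv x d e * pd e V x) * k x d c)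
          + M.g x b c * (∑ d, (∑ e, M.ginv x d e * pd e V x) * k x d a)
          + M.g x c a * (∑ d, (∑ e, M.ginv x d e * pd e V x) * k x d b)) := by
  rw [covD2_conf M M' V hV hconf k hk_symm hk_smooth x a b c,
    covD2_conf M M' V hV hconf k hk_symm hk_smooth x b c a,
    covD2_conf M M' V hV hconf k hk_symm hk_smooth x c a b,
    hk_symm x c a, hk_symm x b a, hk_symm x c b,
    M.symm x b a, M.symm x c b, M.symm x a c]
  linear_combination Real.exp (4 * V x) * hKilling x a b c
end

/-- if `k` is a trace-free symmetric Killing tensor for `g`, then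
the weight-4 rescaling `e^{4V} k` is a Killing tensor for `ĝ = e^{2V} g` iff
`k_{ab} ∇^b V = 0`. -/
theorem killing_in_second_scale_iff {n : ℕ} (hn : 1 ≤ n) (M M' : PseudoRiemMetric n)
    (V : (Fin n → ℝ) → ℝ) (hV : ContDiff ℝ (⊤ : ℕ∞) V)
    (hconf : ∀ x a b, M'.g x a b = Real.exp (2 * V x) * M.g x a b)
    (k : (Fin n → ℝ) → Fin n → Fin n → ℝ)
    (hk_symm : ∀ x a b, k x a b = k x b a)
    (hk_tf : ∀ x, (∑ a, ∑ b, M.ginv x a b * k x a b) = 0)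
    (hk_smooth : ∀ a b, ContDiff ℝ (⊤ : ℕ∞) fun x => k x a b)
    (hKilling : ∀ x a b c,
      M.covD2 k x a b c + M.covD2 k x b c a + M.covD2 k x c a b = 0)
    (hdivfree : ∀ x a, (∑ b, ∑ c, M.ginv x b c * M.covD2 k x c b a) = 0) :
    (∀ x a b c,
        M'.covD2 (fun y p q => Real.exp (4 * V y) * k y p q) x a b c
          + M'.covD2 (fun y p q => Real.exp (4 * V y) * k y p q) x b c a
          + M'.covD2 (fun y p q => Real.exp (4 * V y) * k y p q) x c a b = 0)
      ↔ (∀ x a, (∑ b, k x a b * (∑ c, M.ginv x b c * pd c V x)) = 0) := by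
  constructor
  · intro H x a
    set W : Fin n → ℝ := fun p => ∑ d, (∑ e, M.ginv x d e * pd e V x) * k x d p with hW
    have hS : ∀ p q r : Fin n,
        M.g x p q * W r + M.g x q r * W p + M.g x r p * W q = 0 := by
      intro p q r
      have h1 := (cyclic_conf M M' V hV hconf k hk_symm hk_smooth hKilling x p q r).symm.trans
        (H x p q r)
      rcases mul_eq_zero.mp h1 with h | h
      · exact absurd h (by positivity)
      · exact h
    have hsum : (∑ p, ∑ q, M.ginv x p q *
        (M.g x p q * W a + M.g x q a * W p + M.g x a p * W q)) = 0 := by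
      simp [hS]
    have e1 : ∀ p : Fin n, (∑ q, M.ginv x p q *
          (M.g x p q * W a + M.g x q a * W p + M.g x a p * W q))
        = W a * (∑ q, M.ginv x p q * M.g x q p)
          + W p * (∑ q, M.ginv x p q * M.g x q a)
          + ∑ q, (M.g x a p * M.ginv x p q) * W q := by
      intro p
      rw [Finset.mul_sum, Finset.mul_sum, ← Finset.sum_add_distrib, ← Finset.sum_add_distrib]
      exact Finset.sum_congr rfl fun q _ => by rw [M.symm x p q]; ring
    have hT : (∑ p, ∑ q, M.ginv x p q *
        (M.g x p q * W a + M.g x q a * W p + M.g x a p * W q)) = ((n : ℝ) + 2) * W a := by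
      rw [Finset.sum_congr rfl fun p _ => e1 p, Finset.sum_add_distrib, Finset.sum_add_distrib]
      have t1 : (∑ p : Fin n, W a * (∑ q, M.ginv x p q * M.g x q p)) = (n : ℝ) * W a := by
        have : ∀ p : Fin n, W a * (∑ q, M.ginv x p q * M.g x q p) = W a := by
          intro p; rw [M.invl x p p]; simp
        rw [Finset.sum_congr rfl fun p _ => this p]
        simp [Finset.card_univ, mul_comm]
      have t2 : (∑ p : Fin n, W p * (∑ q, M.ginv x p q * M.g x q a)) = W a := by
        have : ∀ p : Fin n, W p * (∑ q, M.ginv x p q * M.g x q a)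
            = if p = a then W p else 0 := by
          intro p; rw [M.invl x p a]; split_ifs <;> simp
        rw [Finset.sum_congr rfl fun p _ => this p]
        simp
      have t3 : (∑ p : Fin n, ∑ q, (M.g x a p * M.ginv x p q) * W q) = W a := by
        rw [Finset.sum_comm]
        have : ∀ q : Fin n, (∑ p, (M.g x a p * M.ginv x p q) * W q)
            = if a = q then W q else 0 := by
          intro q
          rw [← Finset.sum_mul, M.invr x a q]
          split_ifs <;> simp
        rw [Finset.sum_congr rfl fun q _ => this q]
        simp
      rw [t1, t2, t3]; ring
    have hWa : W a = 0 := by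
      have h2 : ((n : ℝ) + 2) * W a = 0 := hT ▸ hsum
      have h3 : ((n : ℝ) + 2) ≠ 0 := by positivity
      exact (mul_eq_zero.mp h2).resolve_left h3
    calc (∑ b, k x a b * (∑ c, M.ginv x b c * pd c V x))
        = W a := Finset.sum_congr rfl fun b _ => by
          rw [hk_symm x a b]; exact mul_comm _ _
      _ = 0 := hWa
  · intro h x a b c
    rw [cyclic_conf M M' V hV hconf k hk_symm hk_smooth hKilling x a b c]
    have hw : ∀ p : Fin n, (∑ d, (∑ e, M.ginv x d e * pd e V x) * k x d p) = 0 := by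
      intro p
      calc (∑ d, (∑ e, M.ginv x d e * pd e V x) * k x d p)
          = ∑ d, k x p d * (∑ e, M.ginv x d e * pd e V x) :=
            Finset.sum_congr rfl fun d _ => by rw [hk_symm x d p]; exact mul_comm _ _
        _ = 0 := h x p
    simp [hw]
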